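/- arXiv:2409.20347 — 2 statements merged into one kernel-verified Lean document; each statement's English description precedes it below -/
import Mathlib

section
/- Let b, σ, δ, M, Q > 0, P ≥ 0, and define A₋, E₋, F as A₋ = (1/(2M))(b + σ²/2 + δ/2 − √((b + σ²/2 + δ/2)² + 2MP)), E₋ = (Q + (σ²/2)A₋)/(δ + b − 2MA₋), F = M E₋²/δ. Then the function Φ(x) = (A₋/2)x² + E₋ x + F satisfies, for all x ∈ [0,1], −δΦ(x) + M(Φ'(x))² − b x Φ'(x) + (σ²/2) x(1−x) Φ''(x) − (P/2)x² + Q x = 0. -/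
/-- Verification of the quadratic ansatz: `Φ(x) = (A₋/2)x² + E₋x + F` solves the
stationary HJB equation (28) of the mean field Jacobi game on [0,1]. -/
theorem hjb_quadratic_solution
    (b σ δ M Q : ℝ) (hb : 0 < b) (hσ : 0 < σ) (hδ : 0 < δ) (hM : 0 < M) (hQ : 0 < Q)
    (P : ℝ) (hP : 0 ≤ P)
    (Am Em F : ℝ)
    (hAm : Am = (1 / (2 * M)) * (b + σ ^ 2 / 2 + δ / 2
      - Real.sqrt ((b + σ ^ 2 / 2 + δ / 2) ^ 2 + 2 * M * P)))
    (hEm : Em = (Q + σ ^ 2 / 2 * Am) / (δ + b - 2 * M * Am))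
    (hF : F = M * Em ^ 2 / δ)
    (Φ : ℝ → ℝ) (hΦ : ∀ x : ℝ, Φ x = Am / 2 * x ^ 2 + Em * x + F) :
    ∀ x ∈ Set.Icc (0:ℝ) 1,
      -δ * Φ x + M * (deriv Φ x) ^ 2 - b * x * deriv Φ x
        + σ ^ 2 / 2 * (x * (1 - x)) * deriv (deriv Φ) x
        - P / 2 * x ^ 2 + Q * x = 0 := by
  set S : ℝ := b + σ ^ 2 / 2 + δ / 2 with hS
  have hSpos : 0 < S := by positivity
  have hrad : 0 ≤ S ^ 2 + 2 * M * P := by positivity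
  set s : ℝ := Real.sqrt (S ^ 2 + 2 * M * P) with hs
  have hs2 : s ^ 2 = S ^ 2 + 2 * M * P := Real.sq_sqrt hrad
  have hsge : S ≤ s := by
    have := Real.sqrt_le_sqrt (show S ^ 2 ≤ S ^ 2 + 2 * M * P by nlinarith)
    rwa [Real.sqrt_sq hSpos.le] at this
  -- key quadratic identity for Am
  have hA : M * Am ^ 2 = S * Am + P / 2 := by
    have hM' : (2 * M) ≠ 0 := by positivity
    rw [hAm]
    field_simp
    nlinarith [hs2]
  -- denominator positivity
  have hden : 0 < δ + b - 2 * M * Am := by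
    have : 2 * M * Am = S - s := by
      rw [hAm]; field_simp
    rw [this]
    have : δ + b - S = δ / 2 - σ ^ 2 / 2 + 0 := by rw [hS]; ring
    nlinarith [hsge]
  have hE2 : Em * (δ + b - 2 * M * Am) = Q + σ ^ 2 / 2 * Am := by
    rw [hEm]; exact div_mul_cancel₀ _ hden.ne'
  have hF2 : δ * F = M * Em ^ 2 := by
    rw [hF]; field_simp
  -- derivatives
  have hfun : Φ = fun x => Am / 2 * x ^ 2 + Em * x + F := funext hΦ
  have hd1 : ∀ x : ℝ, HasDerivAt Φ (Am * x + Em) x := by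
    intro x
    rw [hfun]
    have h := (((hasDerivAt_pow 2 x).const_mul (Am / 2)).add
      ((hasDerivAt_id x).const_mul Em)).add (hasDerivAt_const x F)
    exact h.congr_deriv (by simp; ring)
  have hderiv1 : deriv Φ = fun x => Am * x + Em := funext fun x => (hd1 x).deriv
  have hd2 : ∀ x : ℝ, HasDerivAt (deriv Φ) Am x := by
    intro x
    rw [hderiv1]
    have h := ((hasDerivAt_id x).const_mul Am).add (hasDerivAt_const x Em)
    exact h.congr_deriv (by simp)
  intro x _
  rw [hΦ x, (hd2 x).deriv, hderiv1]
  simp only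
  linear_combination x ^ 2 * hA - x * hE2 - hF2
end

section
/- Let b, σ, M > 0, P ≥ 0, Q > 0, define h' = σ²/2 and A_E = (1/(2M))( b + h' − √( (b + h')² + 2MP ) ), E_E = (Q + (σ²/2)A_E)/(b − 2MA_E). Then A_E ≤ 0, b − 2MA_E > 0, and the function Φ(x) = (A_E/2)x² + E_E x together with the constant H = M E_E² satisfies −H + M(Φ'(x))² − b x Φ'(x) + (σ²/2)x(1−x)Φ''(x) − (P/2)x² + Qx = 0 for all x ∈ [0,1]. -/
/-- Ergodic (δ = 0) HJB verification: the pair `(H, Φ)` with `H = M E_E²` and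
`Φ(x) = (A_E/2)x² + E_E x` solves the ergodic HJB equation (71). -/
theorem ergodic_hjb_solution
    (b σ M : ℝ) (hb : 0 < b) (hσ : 0 < σ) (hM : 0 < M)
    (P Q : ℝ) (hP : 0 ≤ P) (hQ : 0 < Q)
    (AE EE : ℝ)
    (hAE : AE = (1 / (2 * M)) * (b + σ ^ 2 / 2
      - Real.sqrt ((b + σ ^ 2 / 2) ^ 2 + 2 * M * P)))
    (hEE : EE = (Q + σ ^ 2 / 2 * AE) / (b - 2 * M * AE))
    (Φ : ℝ → ℝ) (hΦ : ∀ x : ℝ, Φ x = AE / 2 * x ^ 2 + EE * x)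
    (H : ℝ) (hH : H = M * EE ^ 2) :
    AE ≤ 0 ∧ b - 2 * M * AE > 0 ∧
    ∀ x ∈ Set.Icc (0:ℝ) 1,
      -H + M * (deriv Φ x) ^ 2 - b * x * deriv Φ x
        + σ ^ 2 / 2 * (x * (1 - x)) * deriv (deriv Φ) x
        - P / 2 * x ^ 2 + Q * x = 0 := by
  set c : ℝ := b + σ ^ 2 / 2 with hc
  set s : ℝ := Real.sqrt (c ^ 2 + 2 * M * P) with hs
  have harg : (0:ℝ) ≤ c ^ 2 + 2 * M * P := by positivity
  have hs2 : s ^ 2 = c ^ 2 + 2 * M * P := Real.sq_sqrt harg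
  have hcs : c ≤ s := by
    have : c ≤ Real.sqrt (c ^ 2) := by
      rw [Real.sqrt_sq_eq_abs]; exact le_abs_self c
    exact this.trans (Real.sqrt_le_sqrt (by nlinarith))
  have h2M : (2 : ℝ) * M ≠ 0 := by positivity
  have hAE' : 2 * M * AE = c - s := by
    rw [hAE]; field_simp
  have hAle : AE ≤ 0 := by nlinarith
  have hden : b - 2 * M * AE > 0 := by
    rw [hAE']
    have : (0:ℝ) < σ ^ 2 / 2 := by positivity
    nlinarith
  have h4 : (2 * M * AE) ^ 2 - 2 * c * (2 * M * AE) - 2 * M * P = 0 := by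
    rw [hAE']; linear_combination hs2
  have eq1 : M * AE ^ 2 - c * AE - P / 2 = 0 := by
    have h5 : (4 * M) * (M * AE ^ 2 - c * AE - P / 2) = 0 := by linear_combination h4
    have h6 : (4 : ℝ) * M ≠ 0 := by positivity
    exact (mul_eq_zero.mp h5).resolve_left h6
  have eq2 : EE * (b - 2 * M * AE) = Q + σ ^ 2 / 2 * AE := by
    rw [hEE, div_mul_cancel₀ _ hden.ne']
  have hΦfun : Φ = fun x => AE / 2 * x ^ 2 + EE * x := funext hΦ
  have hd1 : deriv Φ = fun x => AE * x + EE := by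
    rw [hΦfun]; funext x
    have h : HasDerivAt (fun x : ℝ => AE / 2 * x ^ 2 + EE * x)
        (AE / 2 * (↑2 * x ^ 1) + EE * 1) x :=
      ((hasDerivAt_pow 2 x).const_mul (AE / 2)).add ((hasDerivAt_id x).const_mul EE)
    rw [h.deriv]; ring
  have hd2 : ∀ x : ℝ, deriv (fun x : ℝ => AE * x + EE) x = AE := by
    intro x
    have h : HasDerivAt (fun x : ℝ => AE * x + EE) AE x := by
      simpa using ((hasDerivAt_id x).const_mul AE).add_const EE
    exact h.deriv
  refine ⟨hAle, hden, fun x _ => ?_⟩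
  rw [hd1, hd2 x, hH]
  simp only
  have hc' : c = b + σ ^ 2 / 2 := hc
  linear_combination x ^ 2 * eq1 - x * eq2 + (AE * x ^ 2) * hc'
end
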